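/- For every Lebesgue measurable function f : ℝⁿ → ℝ and every t ∈ ℝ, one has the inclusions {f^∨ < t} ⊂ {f < t}^(1) ⊂ {f^∨ ≤ t} and {f^∧ > t} ⊂ {f > t}^(1) ⊂ {f^∧ ≥ t}. -/

import Mathlib

open MeasureTheory Metric Set Filter Topology ENNReal NNReal

noncomputable section

/-- The set of points where the measurable set `A` has `n`-dimensional density `t`. -/
def densityPt {X : Type*} [MetricSpace X] [MeasureSpace X] (A : Set X) (t : ℝ≥0∞) : Set X :=
  {x | Tendsto (fun ρ : ℝ => volume (A ∩ ball x ρ) / volume (ball x ρ)) (𝓝[>] 0) (𝓝 t)}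

/-- The essential boundary `∂ᵉA = X \ (A^(0) ∪ A^(1))`. -/
def essBoundary {X : Type*} [MetricSpace X] [MeasureSpace X] (A : Set X) : Set X :=
  (densityPt A 0 ∪ densityPt A 1)ᶜ

/-- Approximate lower limit `f^∧(x) = sup {t : x ∈ {f > t}^(1)}`. -/
def apLower {X : Type*} [MetricSpace X] [MeasureSpace X] (f : X → ℝ) (x : X) : EReal :=
  sSup {t : EReal | ∃ s : ℝ, t = (s : EReal) ∧ x ∈ densityPt {y | s < f y} 1}

/-- Approximate upper limit `f^∨(x) = inf {t : x ∈ {f > t}^(0)}`. -/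
def apUpper {X : Type*} [MetricSpace X] [MeasureSpace X] (f : X → ℝ) (x : X) : EReal :=
  sInf {t : EReal | ∃ s : ℝ, t = (s : EReal) ∧ x ∈ densityPt {y | s < f y} 0}

/-- `K` essentially disconnects `G`: there is a nontrivial Borel partition `{Gp, Gm}` of `G`
with `μH[d]((G^(1) ∩ ∂ᵉGp ∩ ∂ᵉGm) \ K) = 0`, where `d` is the codimension-one exponent. -/
def essentiallyDisconnects {X : Type*} [MetricSpace X] [MeasureSpace X] [BorelSpace X]
    (d : ℝ) (K G : Set X) : Prop :=
  ∃ Gp Gm : Set X, MeasurableSet Gp ∧ MeasurableSet Gm ∧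
    volume (Gp ∩ Gm) = 0 ∧ volume (symmDiff G (Gp ∪ Gm)) = 0 ∧
    0 < volume Gp ∧ 0 < volume Gm ∧
    μH[d] ((densityPt G 1 ∩ essBoundary Gp ∩ essBoundary Gm) \ K) = 0

section Aux

variable {n : ℕ}

local notation "X" => EuclideanSpace ℝ (Fin n)

/-- If `A ⊆ A'`, then points of density 1 of `A` are points of density 1 of `A'`. -/
lemma densityPt_one_mono {A A' : Set X} (h : A ⊆ A') :
    densityPt A 1 ⊆ densityPt A' 1 := by
  intro x hx
  refine tendsto_of_tendsto_of_tendsto_of_le_of_le' hx tendsto_const_nhds ?_ ?_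
  · filter_upwards with ρ
    exact ENNReal.div_le_div_right (measure_mono (inter_subset_inter_left _ h)) _
  · filter_upwards with ρ
    exact ENNReal.div_le_of_le_mul (by simpa using measure_mono (inter_subset_right))

/-- If `A ⊆ A'`, then points of density 0 of `A'` are points of density 0 of `A`. -/
lemma densityPt_zero_anti {A A' : Set X} (h : A ⊆ A') :
    densityPt A' 0 ⊆ densityPt A 0 := by
  intro x hx
  refine tendsto_of_tendsto_of_tendsto_of_le_of_le' tendsto_const_nhds hx ?_ ?_
  · filter_upwards with ρ; exact zero_le
  · filter_upwards with ρ
    exact ENNReal.div_le_div_right (measure_mono (inter_subset_inter_left _ h)) _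

/-- For a measurable set, the density ratio of the complement is `1` minus that of the set. -/
lemma ratio_compl {A : Set X} (hA : MeasurableSet A) (x : X) {ρ : ℝ} (hρ : 0 < ρ) :
    volume (Aᶜ ∩ ball x ρ) / volume (ball x ρ)
      = 1 - volume (A ∩ ball x ρ) / volume (ball x ρ) := by
  have hpos : volume (ball x ρ) ≠ 0 := (measure_ball_pos volume x hρ).ne'
  have hfin : volume (ball x ρ) ≠ ∞ := measure_ball_lt_top.ne
  have hinter : volume (ball x ρ ∩ A) + volume (ball x ρ \ A) = volume (ball x ρ) :=
    measure_inter_add_diff _ hA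
  have h1 : Aᶜ ∩ ball x ρ = ball x ρ \ A := by
    rw [Set.diff_eq, inter_comm]
  have h2 : volume (ball x ρ \ A) = volume (ball x ρ) - volume (A ∩ ball x ρ) := by
    rw [inter_comm A, ← hinter, ENNReal.add_sub_cancel_left
      ((measure_mono inter_subset_left).trans_lt hfin.lt_top).ne]
  rw [h1, h2, ENNReal.sub_div (fun _ _ => hpos), ENNReal.div_self hpos hfin]

/-- Complement of a density-0 set is a density-1 set. -/
lemma densityPt_compl_one {A : Set X} (hA : MeasurableSet A) :
    densityPt A 0 ⊆ densityPt Aᶜ 1 := by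
  intro x hx
  have : Tendsto (fun ρ : ℝ => 1 - volume (A ∩ ball x ρ) / volume (ball x ρ)) (𝓝[>] 0)
      (𝓝 (1 - 0)) := ((ENNReal.continuous_sub_left (by norm_num)).tendsto 0).comp hx
  rw [tsub_zero] at this
  refine this.congr' ?_
  filter_upwards [self_mem_nhdsWithin] with ρ (hρ : 0 < ρ)
  exact (ratio_compl hA x hρ).symm

/-- Complement of a density-1 set is a density-0 set. -/
lemma densityPt_compl_zero {A : Set X} (hA : MeasurableSet A) :
    densityPt A 1 ⊆ densityPt Aᶜ 0 := by
  intro x hx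
  have : Tendsto (fun ρ : ℝ => 1 - volume (A ∩ ball x ρ) / volume (ball x ρ)) (𝓝[>] 0)
      (𝓝 (1 - 1)) := ((ENNReal.continuous_sub_left (by norm_num)).tendsto 1).comp hx
  rw [tsub_self] at this
  refine this.congr' ?_
  filter_upwards [self_mem_nhdsWithin] with ρ (hρ : 0 < ρ)
  exact (ratio_compl hA x hρ).symm

end Aux

/-- For every Lebesgue measurable `f : ℝⁿ → ℝ` and every `t ∈ ℝ`, one has
`{f^∨ < t} ⊆ {f < t}^(1) ⊆ {f^∨ ≤ t}` and `{f^∧ > t} ⊆ {f > t}^(1) ⊆ {f^∧ ≥ t}`. -/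
theorem statement13 (n : ℕ) (f : EuclideanSpace ℝ (Fin n) → ℝ) (hf : Measurable f) (t : ℝ) :
    {x | apUpper f x < (t : EReal)} ⊆ densityPt {y | f y < t} 1 ∧
    densityPt {y | f y < t} 1 ⊆ {x | apUpper f x ≤ (t : EReal)} ∧
    {x | (t : EReal) < apLower f x} ⊆ densityPt {y | t < f y} 1 ∧
    densityPt {y | t < f y} 1 ⊆ {x | (t : EReal) ≤ apLower f x} := by
  refine ⟨?_, ?_, ?_, ?_⟩
  · intro x hx
    rw [Set.mem_setOf_eq, apUpper, sInf_lt_iff] at hx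
    obtain ⟨a, ⟨s, rfl, hs⟩, hst⟩ := hx
    have hst' : s < t := by exact_mod_cast hst
    have h1 : x ∈ densityPt {y | s < f y}ᶜ 1 :=
      densityPt_compl_one (measurableSet_lt measurable_const hf) hs
    refine densityPt_one_mono (fun y hy => ?_) h1
    simp only [Set.mem_compl_iff, Set.mem_setOf_eq, not_lt] at hy ⊢
    exact lt_of_le_of_lt hy hst'
  · intro x hx
    have h0 : x ∈ densityPt {y | f y < t}ᶜ 0 :=
      densityPt_compl_zero (measurableSet_lt hf measurable_const) hx
    have h1 : x ∈ densityPt {y | t < f y} 0 := by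
      refine densityPt_zero_anti (fun y hy => ?_) h0
      simp only [Set.mem_compl_iff, Set.mem_setOf_eq, not_lt] at hy ⊢
      exact hy.le
    have hmem : (t : EReal) ∈ {a : EReal | ∃ s : ℝ,
        a = (s : EReal) ∧ x ∈ densityPt {y | s < f y} 0} := ⟨t, rfl, h1⟩
    exact sInf_le hmem
  · intro x hx
    rw [Set.mem_setOf_eq, apLower, lt_sSup_iff] at hx
    obtain ⟨a, ⟨s, rfl, hs⟩, hst⟩ := hx
    have hst' : t < s := by exact_mod_cast hst
    refine densityPt_one_mono (fun y hy => ?_) hs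
    exact lt_trans hst' hy
  · intro x hx
    have hmem : (t : EReal) ∈ {a : EReal | ∃ s : ℝ,
        a = (s : EReal) ∧ x ∈ densityPt {y | s < f y} 1} := ⟨t, rfl, hx⟩
    exact le_sSup hmem
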